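/- arXiv:math/0008020 — 3 statements merged into one kernel-verified Lean document; each statement's English description precedes it below -/
import Mathlib

section
/- Let n ≥ 1 and let a, b be partitions of n. Then in the dominance lattice L_B(n+1) one has sup(a^{↓1}, b^{↓1}) = (sup_{L_B(n)}(a,b))^{↓1}. Consequently the set {s^{↓1} : s ∈ L_B(n)} is a sublattice of L_B(n+1). -/
/-!
Partitions are modelled as functions `s : ℕ → ℕ` (0-based: `s 0` is the first
part `s_1`), nonincreasing and eventually zero.  A paper index `i ≥ 1`
(columns, transitions `→_i`, increments `s^{↓i}`) corresponds to the Lean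
index `i - 1`.
-/

/-- `s` is a partition: nonincreasing and eventually zero. -/
def IsPartition (s : ℕ → ℕ) : Prop :=
  (∀ i, s (i + 1) ≤ s i) ∧ ∃ N, ∀ i, N ≤ i → s i = 0

/-- `j`-th suffix sum (0-based: `suff s 0` is the total sum `|s|`,
`suff s (j-1)` is the paper's `Σ_j`). -/
noncomputable def suff (s : ℕ → ℕ) (j : ℕ) : ℕ := ∑' i, s (j + i)

/-- `s` is a partition of `n`. -/
noncomputable def IsPartOf (n : ℕ) (s : ℕ → ℕ) : Prop := IsPartition s ∧ suff s 0 = n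

/-- Prefix sum of the first `j` parts. -/
def psum (s : ℕ → ℕ) (j : ℕ) : ℕ := ∑ i ∈ Finset.range j, s i

/-- Dominance ordering: `Dom s t` means `s ≥ t`, i.e. every prefix sum of `s`
is at least the corresponding prefix sum of `t`. -/
def Dom (s t : ℕ → ℕ) : Prop := ∀ j, psum t j ≤ psum s j

/-- `s^{↓(i+1)}`: add one grain on the (0-based) `i`-th column. -/
def incr (s : ℕ → ℕ) (i : ℕ) : ℕ → ℕ := Function.update s i (s i + 1)

/-- Move one grain from column `a` to column `b` (0-based). -/
def moveGrain (s : ℕ → ℕ) (a b : ℕ) : ℕ → ℕ :=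
  fun j => if j = a then s a - 1 else if j = b then s b + 1 else s j

/-- `s` has a cliff at (0-based) column `i`: `s_i ≥ s_{i+1} + 2`. -/
def Cliff (s : ℕ → ℕ) (i : ℕ) : Prop := s (i + 1) + 2 ≤ s i

/-- `s` has a slippery step at (0-based) column `i`, the plateau ending at
(0-based) column `m`:  `s_i - 1 = s_{i+1} = ⋯ = s_m = s_{m+1} + 1` (in 0-based
indices), with `m ≥ i + 1`. -/
def SlipAt (s : ℕ → ℕ) (i m : ℕ) : Prop :=
  i + 1 ≤ m ∧ (∀ j, i + 1 ≤ j → j ≤ m → s j + 1 = s i) ∧ s (m + 1) + 2 = s i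

/-- The transition `s →_{i+1} t` of the paper (0-based `i`): a fall from a
cliff at `i`, or a slip from a slippery step at `i` (the grain landing just
after the plateau). -/
def Step (s : ℕ → ℕ) (i : ℕ) (t : ℕ → ℕ) : Prop :=
  (Cliff s i ∧ t = moveGrain s i (i + 1)) ∨
  (∃ m, SlipAt s i m ∧ t = moveGrain s i (m + 1))

/-- The set of configurations directly reachable from `s`. -/
def dirreach (s : ℕ → ℕ) : Set (ℕ → ℕ) := {t | ∃ i, Step s i t}

/-- `s` has a (slippery, if `l ≥ 2`) plateau of length `l` at `1`:
`s_1 = s_2 = ⋯ = s_l = s_{l+1} + 1`. -/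
def SlipperyPlateau1 (s : ℕ → ℕ) (l : ℕ) : Prop :=
  (∀ j, j < l → s j = s 0) ∧ s l + 1 = s 0

/-- `s` has a non-slippery plateau at `1`:
`s_1 = ⋯ = s_l ≥ s_{l+1} + 2` for some `l ≥ 2`. -/
def NonSlipperyPlateau1 (s : ℕ → ℕ) : Prop :=
  ∃ l, 2 ≤ l ∧ (∀ j, j < l → s j = s 0) ∧ s l + 2 ≤ s 0

/-- `s` has a slippery step at `1`. -/
def SlipperyStep1 (s : ℕ → ℕ) : Prop := ∃ m, SlipAt s 0 m

/-- `s` has a non-slippery step at `1`: `s_1 = s_2 + 1` and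
`s_2 = ⋯ = s_m ≥ s_{m+1} + 2` for some `m ≥ 2` (here `m` is 0-based, `≥ 1`). -/
def NonSlipperyStep1 (s : ℕ → ℕ) : Prop :=
  s 0 = s 1 + 1 ∧ ∃ m, 1 ≤ m ∧ (∀ j, 1 ≤ j → j ≤ m → s j = s 1) ∧ s (m + 1) + 2 ≤ s 1

/-- `c` is the infimum of `a` and `b` in the dominance lattice `L_B(n)`. -/
noncomputable def IsInfOn (n : ℕ) (a b c : ℕ → ℕ) : Prop :=
  IsPartOf n c ∧ Dom a c ∧ Dom b c ∧ ∀ d, IsPartOf n d → Dom a d → Dom b d → Dom c d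

/-- `c` is the supremum of `a` and `b` in the dominance lattice `L_B(n)`. -/
noncomputable def IsSupOn (n : ℕ) (a b c : ℕ → ℕ) : Prop :=
  IsPartOf n c ∧ Dom c a ∧ Dom c b ∧ ∀ d, IsPartOf n d → Dom d a → Dom d b → Dom d c

/-- The order `≥_∞` on the set `P` of all partitions: `GeInf s t` means
`s ≥_∞ t`, i.e. every suffix sum of `s` is at most that of `t`. -/
noncomputable def GeInf (s t : ℕ → ℕ) : Prop := ∀ j, suff s j ≤ suff t j

/-- `c` is the infimum of `a` and `b` in `(P, ≥_∞)`. -/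
noncomputable def IsInfP (a b c : ℕ → ℕ) : Prop :=
  IsPartition c ∧ GeInf a c ∧ GeInf b c ∧
    ∀ d, IsPartition d → GeInf a d → GeInf b d → GeInf c d

/-- `c` is the supremum of `a` and `b` in `(P, ≥_∞)`. -/
noncomputable def IsSupP (a b c : ℕ → ℕ) : Prop :=
  IsPartition c ∧ GeInf c a ∧ GeInf c b ∧
    ∀ d, IsPartition d → GeInf d a → GeInf d b → GeInf d c

/-- The map `π`: delete the first part, `(s_1, s_2, …) ↦ (s_2, …)`. -/
def shift (s : ℕ → ℕ) : ℕ → ℕ := fun i => s (i + 1)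

section Aux

lemma psum_succ (s : ℕ → ℕ) (j : ℕ) : psum s (j+1) = psum s j + s j :=
  Finset.sum_range_succ s j

lemma psum_zero' (s : ℕ → ℕ) : psum s 0 = 0 := rfl

lemma anti_of_step {s : ℕ → ℕ} (h : ∀ i, s (i+1) ≤ s i) {i j : ℕ} (hij : i ≤ j) :
    s j ≤ s i := by
  induction hij with
  | refl => exact le_rfl
  | step _ ih => exact le_trans (h _) ih

lemma psum_stable {s : ℕ → ℕ} {M : ℕ} (h : ∀ i, M ≤ i → s i = 0) {j : ℕ} (hj : M ≤ j) :
    psum s j = psum s M := by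
  induction j with
  | zero => rw [Nat.le_zero.mp hj]
  | succ j ih =>
    rcases Nat.lt_or_ge M (j+1) with hlt | hge
    · rw [psum_succ, h j (by omega), ih (by omega)]; omega
    · rw [le_antisymm hj hge]

lemma suff_eq_psum {s : ℕ → ℕ} {M : ℕ} (h : ∀ i, M ≤ i → s i = 0) : suff s 0 = psum s M := by
  unfold suff psum
  simp only [zero_add]
  exact tsum_eq_sum (fun b hb => h b (by simpa using hb))

lemma psum_eq_total {n : ℕ} {s : ℕ → ℕ} (hs : IsPartOf n s) {M j : ℕ}
    (h : ∀ i, M ≤ i → s i = 0) (hj : M ≤ j) : psum s j = n := by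
  rw [psum_stable h hj, ← suff_eq_psum h, hs.2]

lemma part0_pos {n : ℕ} {s : ℕ → ℕ} (hs : IsPartOf n s) (hn : 1 ≤ n) : 1 ≤ s 0 := by
  by_contra h
  have hall : ∀ i, (0:ℕ) ≤ i → s i = 0 := by
    intro i _
    have := anti_of_step hs.1.1 (Nat.zero_le i)
    omega
  have := psum_eq_total hs hall (le_refl 0)
  rw [psum_zero'] at this
  omega

lemma psum_le_mul {s : ℕ → ℕ} (h : ∀ i, s (i+1) ≤ s i) (j : ℕ) : psum s j ≤ j * s 0 := by
  induction j with
  | zero => simp [psum_zero']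
  | succ j ih =>
    have := anti_of_step h (Nat.zero_le j)
    rw [psum_succ, Nat.succ_mul]; omega

lemma psum_plateau {s : ℕ → ℕ} {j : ℕ} (h : ∀ i, i < j → s i = s 0) : psum s j = j * s 0 := by
  induction j with
  | zero => simp [psum_zero']
  | succ j ih =>
    rw [psum_succ, ih (fun i hi => h i (by omega)), h j (by omega), Nat.succ_mul]

lemma psum_step_bound {s : ℕ → ℕ} (h : ∀ i, s (i+1) ≤ s i) (h1 : s 1 < s 0) :
    ∀ i, psum s i + i ≤ i * s 0 + 1 := by
  intro i
  induction i with
  | zero => simp [psum_zero']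
  | succ i ih =>
    rw [psum_succ, Nat.succ_mul]
    rcases Nat.eq_zero_or_pos i with rfl | hpos
    · rw [psum_zero']; omega
    · have hs1 : s i ≤ s 1 := anti_of_step h hpos
      omega

lemma psum_incr {s : ℕ → ℕ} : ∀ {j}, 1 ≤ j → psum (incr s 0) j = psum s j + 1 := by
  intro j hj
  induction j with
  | zero => omega
  | succ j ih =>
    rcases Nat.eq_zero_or_pos j with rfl | hpos
    · rw [psum_succ, psum_succ, psum_zero', psum_zero']
      simp [incr]
    · rw [psum_succ, psum_succ, ih hpos]
      have : incr s 0 j = s j := by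
        unfold incr; rw [Function.update_of_ne (by omega)]
      omega

end Aux
section Aux2

lemma incr_partOf {n : ℕ} {s : ℕ → ℕ} (hs : IsPartOf n s) : IsPartOf (n+1) (incr s 0) := by
  obtain ⟨⟨hstep, M, hM⟩, hsum⟩ := hs
  have hz : ∀ i, M + 1 ≤ i → incr s 0 i = 0 := by
    intro i hi
    unfold incr
    rw [Function.update_of_ne (by omega)]
    exact hM i (by omega)
  refine ⟨⟨?_, ⟨M+1, hz⟩⟩, ?_⟩
  · intro i
    rcases Nat.eq_zero_or_pos i with rfl | hpos
    · show incr s 0 1 ≤ incr s 0 0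
      unfold incr
      rw [Function.update_of_ne (by omega), Function.update_self]
      have h : s 1 ≤ s 0 := hstep 0
      omega
    · unfold incr
      rw [Function.update_of_ne (by omega), Function.update_of_ne (by omega)]
      exact hstep i
  · rw [suff_eq_psum hz, psum_incr (by omega), psum_stable hM (by omega),
      ← suff_eq_psum hM, hsum]

lemma dom_incr {a c : ℕ → ℕ} (h : Dom c a) : Dom (incr c 0) (incr a 0) := by
  intro j
  rcases Nat.eq_zero_or_pos j with rfl | hj
  · exact le_rfl
  · rw [psum_incr hj, psum_incr hj]
    exact Nat.add_le_add_right (h j) 1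

lemma plateau_max {s : ℕ → ℕ} {M : ℕ} (hstep : ∀ i, s (i+1) ≤ s i) (hM : ∀ i, M ≤ i → s i = 0)
    (h0 : 1 ≤ s 0) {r : ℕ} (hr : s r = s 0) :
    ∃ k, r ≤ k ∧ (∀ i, i ≤ k → s i = s 0) ∧ s (k+1) < s 0 := by
  have hrM : r < M := by
    by_contra h; push_neg at h; have := hM r h; omega
  have hPr : s 0 ≤ s r := by omega
  have hspec : s 0 ≤ s (Nat.findGreatest (fun i => s 0 ≤ s i) M) :=
    Nat.findGreatest_spec (P := fun i => s 0 ≤ s i) (m := r) hrM.le hPr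
  have hkM : Nat.findGreatest (fun i => s 0 ≤ s i) M ≤ M := Nat.findGreatest_le M
  have hkM' : Nat.findGreatest (fun i => s 0 ≤ s i) M < M := by
    rcases lt_or_eq_of_le hkM with h | h
    · exact h
    · have := hM _ h.ge; omega
  have hgr : ¬ s 0 ≤ s (Nat.findGreatest (fun i => s 0 ≤ s i) M + 1) :=
    Nat.findGreatest_is_greatest (P := fun i => s 0 ≤ s i) (Nat.lt_succ_self _) (by omega)
  refine ⟨Nat.findGreatest (fun i => s 0 ≤ s i) M, Nat.le_findGreatest (P := fun i => s 0 ≤ s i) hrM.le hPr, ?_, by omega⟩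
  intro i hi
  have h1 : s i ≤ s 0 := anti_of_step hstep (Nat.zero_le i)
  have h2 : s (Nat.findGreatest (fun i => s 0 ≤ s i) M) ≤ s i := anti_of_step hstep hi
  omega

lemma update_dec {d : ℕ → ℕ} {m M : ℕ} (hstep : ∀ i, d (i+1) ≤ d i)
    (hzeros : ∀ i, M ≤ i → d i = 0) (hplat : ∀ i, i ≤ m → d i = d 0)
    (hdrop : d (m+1) < d 0) :
    IsPartition (Function.update d m (d m - 1)) ∧
    (∀ j, psum d j = psum (Function.update d m (d m - 1)) j + (if m < j then 1 else 0)) ∧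
    suff (Function.update d m (d m - 1)) 0 + 1 = suff d 0 := by
  set e := Function.update d m (d m - 1) with he
  have h0 : 1 ≤ d 0 := by omega
  have hdm : d m = d 0 := hplat m le_rfl
  have hem : e m = d 0 - 1 := by rw [he, Function.update_self, hdm]
  have hene : ∀ i, i ≠ m → e i = d i := fun i hi => Function.update_of_ne hi _ _
  have hestep : ∀ i, e (i+1) ≤ e i := by
    intro i
    rcases eq_or_ne i m with rfl | h1
    · rw [hem, hene (i+1) (by omega)]
      omega
    · rcases eq_or_ne (i+1) m with h2 | h2
      · rw [hene i h1, h2, hem]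
        have : d i = d 0 := hplat i (by omega)
        omega
      · rw [hene i h1, hene (i+1) h2]
        exact hstep i
  have hezeros : ∀ i, max M (m+1) ≤ i → e i = 0 := by
    intro i hi
    rw [hene i (by omega)]
    exact hzeros i (by omega)
  have hpsum : ∀ j, psum d j = psum e j + (if m < j then 1 else 0) := by
    intro j
    induction j with
    | zero => simp [psum_zero']
    | succ j ih =>
      rw [psum_succ, psum_succ]
      rcases eq_or_ne j m with rfl | h1
      · rw [hem]
        split_ifs at ih ⊢ <;> omega
      · rw [hene j h1]
        split_ifs at ih ⊢ <;> omega
  refine ⟨⟨hestep, ⟨max M (m+1), hezeros⟩⟩, hpsum, ?_⟩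
  rw [suff_eq_psum hezeros, suff_eq_psum (M := max M (m+1)) (fun i hi => hzeros i (by omega)),
    hpsum (max M (m+1))]
  split_ifs with h
  · omega
  · omega

lemma exists_dec {n : ℕ} {z : ℕ → ℕ} (hz : IsPartOf (n+1) z) (h01 : z 1 < z 0) :
    ∃ s, IsPartOf n s ∧ z = incr s 0 := by
  obtain ⟨⟨hstep, M, hM⟩, hsum⟩ := hz
  obtain ⟨hp, hps, hsf⟩ := update_dec (m := 0) hstep hM
    (fun i hi => by rw [Nat.le_zero.mp hi]) h01
  refine ⟨Function.update z 0 (z 0 - 1), ⟨hp, by omega⟩, ?_⟩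
  funext i
  rcases Nat.eq_zero_or_pos i with rfl | hi
  · simp only [incr, Function.update_self]
    omega
  · simp only [incr]
    rw [Function.update_of_ne (show i ≠ 0 by omega), Function.update_of_ne (show i ≠ 0 by omega)]

end Aux2
section Aux3

lemma zone_max {s : ℕ → ℕ} {M : ℕ} (_hstep : ∀ i, s (i+1) ≤ s i) (hM : ∀ i, M ≤ i → s i = 0)
    (h2 : 2 ≤ s 0) {k : ℕ} (hk : s 0 ≤ s k + 1) :
    ∃ k', k ≤ k' ∧ s 0 ≤ s k' + 1 ∧ s (k'+1) + 2 ≤ s 0 := by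
  have hkM : k < M := by
    by_contra h; push_neg at h; have := hM k h; omega
  have hspec : s 0 ≤ s (Nat.findGreatest (fun i => s 0 ≤ s i + 1) M) + 1 :=
    Nat.findGreatest_spec (P := fun i => s 0 ≤ s i + 1) (m := k) hkM.le hk
  have hleM : Nat.findGreatest (fun i => s 0 ≤ s i + 1) M ≤ M := Nat.findGreatest_le M
  have hltM : Nat.findGreatest (fun i => s 0 ≤ s i + 1) M < M := by
    rcases lt_or_eq_of_le hleM with h | h
    · exact h
    · have := hM _ h.ge; omega
  have hgr : ¬ s 0 ≤ s (Nat.findGreatest (fun i => s 0 ≤ s i + 1) M + 1) + 1 :=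
    Nat.findGreatest_is_greatest (P := fun i => s 0 ≤ s i + 1) (Nat.lt_succ_self _) (by omega)
  exact ⟨_, Nat.le_findGreatest (P := fun i => s 0 ≤ s i + 1) hkM.le hk, hspec, by omega⟩

lemma sup_contra {N : ℕ} {x y z : ℕ → ℕ} (hsup : IsSupOn N x y z) {k : ℕ}
    (hz0 : 2 ≤ z 0) (hplat : ∀ i, i ≤ k → z i = z 0) (hdrop : z (k+1) < z 0)
    (hx : ∀ i, k < i → psum x i + i ≤ i * z 0 + k)
    (hy : ∀ i, k < i → psum y i + i ≤ i * z 0 + k) : False := by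
  obtain ⟨hzpart, hdx, hdy, hleast⟩ := hsup
  obtain ⟨hstep, M, hM⟩ := hzpart.1
  have hzsum : suff z 0 = N := hzpart.2
  have hPk : z 0 ≤ z k + 1 := by have := hplat k le_rfl; omega
  obtain ⟨k', hk'ge, hk'spec, hdrop2⟩ := zone_max hstep hM hz0 hPk
  have hplat2 : ∀ i, k < i → i ≤ k' → z i + 1 = z 0 := by
    intro i h1 h2
    have l1 : z i ≤ z (k+1) := anti_of_step hstep h1
    have l2 : z k' ≤ z i := anti_of_step hstep h2
    omega
  set w := moveGrain z k (k'+1) with hw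
  have wval : ∀ i, (i = k ∧ w i + 1 = z 0) ∨ (i = k' + 1 ∧ w i = z i + 1) ∨
      (i ≠ k ∧ i ≠ k' + 1 ∧ w i = z i) := by
    intro i
    rcases eq_or_ne i k with rfl | h1
    · left
      refine ⟨rfl, ?_⟩
      have l1 : w i = z i - 1 := by rw [hw]; unfold moveGrain; simp
      have l2 := hplat i le_rfl
      omega
    · rcases eq_or_ne i (k'+1) with rfl | h2
      · right; left
        refine ⟨rfl, ?_⟩
        rw [hw]; unfold moveGrain
        simp [h1]
      · right; right
        refine ⟨h1, h2, ?_⟩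
        rw [hw]; unfold moveGrain
        simp [h1, h2]
  have wstep : ∀ i, w (i+1) ≤ w i := by
    intro i
    have f1 : z (i+1) ≤ z i := hstep i
    rcases wval i with ⟨e1, v1⟩ | ⟨e1, v1⟩ | ⟨e1, e1', v1⟩ <;>
      rcases wval (i+1) with ⟨e2, v2⟩ | ⟨e2, v2⟩ | ⟨e2, e2', v2⟩
    · omega
    · have hd : z (i+1) + 2 ≤ z 0 := by rw [e2]; exact hdrop2
      omega
    · have hp : z (i+1) + 1 = z 0 := hplat2 (i+1) (by omega) (by omega)
      omega
    · omega
    · omega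
    · omega
    · have hp : z i = z 0 := hplat i (by omega)
      omega
    · have hp : z i + 1 = z 0 := hplat2 i (by omega) (by omega)
      have hd : z (i+1) + 2 ≤ z 0 := by rw [e2]; exact hdrop2
      omega
    · omega
  set T := M + k + k' + 2 with hT
  have wzeros : ∀ i, T ≤ i → w i = 0 := by
    intro i hi
    have hMk : k < M := by
      by_contra h; push_neg at h; have := hM k h; have := hplat k le_rfl; omega
    rcases wval i with ⟨e1, v1⟩ | ⟨e1, v1⟩ | ⟨e1, e1', v1⟩
    · omega
    · omega
    · have := hM i (by omega); omega
  have hpsum : ∀ j, psum z j = psum w j + (if k < j ∧ j ≤ k'+1 then 1 else 0) := by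
    intro j
    induction j with
    | zero => simp [psum_zero']
    | succ j ih =>
      rw [psum_succ, psum_succ]
      rcases wval j with ⟨e1, v1⟩ | ⟨e1, v1⟩ | ⟨e1, e1', v1⟩
      · have l2 : z j = z 0 := hplat j (by omega)
        split_ifs at ih ⊢ <;> omega
      · split_ifs at ih ⊢ <;> omega
      · split_ifs at ih ⊢ <;> omega
  have hwsum : suff w 0 = N := by
    rw [suff_eq_psum wzeros]
    have h1 := hpsum T
    rw [if_neg (by omega)] at h1
    have h2 : psum z T = N := psum_eq_total ⟨⟨hstep, M, hM⟩, hzsum⟩ hM (by omega)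
    omega
  have hphi : ∀ j, k < j → j ≤ k'+1 → psum z j + j = j * z 0 + (k+1) := by
    intro j
    induction j with
    | zero => omega
    | succ j ih =>
      intro h1 h2
      rcases Nat.lt_or_ge k j with h | h
      · have l1 : z j + 1 = z 0 := hplat2 j h (by omega)
        have l2 := ih h (by omega)
        rw [psum_succ, Nat.succ_mul]
        omega
      · have hjk : j = k := by omega
        have l1 : psum z j = j * z 0 := psum_plateau (fun i hi => hplat i (by omega))
        have l2 : z j = z 0 := hplat j (by omega)
        rw [psum_succ, Nat.succ_mul]
        omega
  have hdwx : Dom w x := by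
    intro j
    by_cases h : k < j ∧ j ≤ k'+1
    · have h1 := hphi j h.1 h.2
      have h2 := hx j h.1
      have h3 := hpsum j
      rw [if_pos h] at h3
      omega
    · have h3 := hpsum j
      rw [if_neg h] at h3
      have := hdx j
      omega
  have hdwy : Dom w y := by
    intro j
    by_cases h : k < j ∧ j ≤ k'+1
    · have h1 := hphi j h.1 h.2
      have h2 := hy j h.1
      have h3 := hpsum j
      rw [if_pos h] at h3
      omega
    · have h3 := hpsum j
      rw [if_neg h] at h3
      have := hdy j
      omega
  have hfin := hleast w ⟨⟨wstep, T, wzeros⟩, hwsum⟩ hdwx hdwy (k+1)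
  have h4 := hpsum (k+1)
  rw [if_pos (by omega)] at h4
  omega

end Aux3
/-- For `n ≥ 1`: suprema are preserved by adding one grain on
the first column, and consequently `{s^{↓1} : s ∈ L_B(n)}` is a sublattice of
`L_B(n+1)` (closed under `inf` and `sup`). -/
theorem stmt1 (n : ℕ) (hn : 1 ≤ n) :
    (∀ a b c : ℕ → ℕ, IsPartOf n a → IsPartOf n b → IsSupOn n a b c →
      IsSupOn (n + 1) (incr a 0) (incr b 0) (incr c 0)) ∧
    (∀ x y z : ℕ → ℕ,
      (∃ s, IsPartOf n s ∧ x = incr s 0) → (∃ s, IsPartOf n s ∧ y = incr s 0) →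
      IsInfOn (n + 1) x y z → ∃ s, IsPartOf n s ∧ z = incr s 0) ∧
    (∀ x y z : ℕ → ℕ,
      (∃ s, IsPartOf n s ∧ x = incr s 0) → (∃ s, IsPartOf n s ∧ y = incr s 0) →
      IsSupOn (n + 1) x y z → ∃ s, IsPartOf n s ∧ z = incr s 0) := by
  refine ⟨?_, ?_, ?_⟩
  · -- Part 1: sup is preserved by incr
    intro a b c ha hb hc
    obtain ⟨hcpart, hdca, hdcb, hcleast⟩ := hc
    have ha0 : 1 ≤ a 0 := part0_pos ha hn
    have hb0 : 1 ≤ b 0 := part0_pos hb hn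
    -- the first part of the sup is max of the first parts
    have hc0 : c 0 ≤ max (a 0) (b 0) := by
      by_contra hcon
      push_neg at hcon
      obtain ⟨⟨hcstep, Mc, hMc⟩, hcsum⟩ := hcpart
      have h2 : 2 ≤ c 0 := by omega
      obtain ⟨k, -, hplat, hdrop⟩ := plateau_max hcstep hMc (by omega) (r := 0) rfl
      refine sup_contra (⟨⟨⟨hcstep, Mc, hMc⟩, hcsum⟩, hdca, hdcb, hcleast⟩ :
        IsSupOn n a b c) h2 hplat hdrop ?_ ?_
      · intro i hi
        have l1 : psum a i ≤ i * a 0 := psum_le_mul ha.1.1 i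
        have l2 : i * (a 0 + 1) ≤ i * c 0 := Nat.mul_le_mul_left i (by omega)
        rw [Nat.mul_add, Nat.mul_one] at l2
        omega
      · intro i hi
        have l1 : psum b i ≤ i * b 0 := psum_le_mul hb.1.1 i
        have l2 : i * (b 0 + 1) ≤ i * c 0 := Nat.mul_le_mul_left i (by omega)
        rw [Nat.mul_add, Nat.mul_one] at l2
        omega
    refine ⟨incr_partOf hcpart, dom_incr hdca, dom_incr hdcb, ?_⟩
    intro d hd hda hdb j
    rcases Nat.eq_zero_or_pos j with rfl | hj
    · exact le_rfl
    rw [psum_incr hj]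
    obtain ⟨⟨hdstep, Md, hMd⟩, hdsum⟩ := hd
    have hpa1 : psum a 1 = a 0 := by rw [psum_succ, psum_zero']; omega
    have hpb1 : psum b 1 = b 0 := by rw [psum_succ, psum_zero']; omega
    have hpd1 : psum d 1 = d 0 := by rw [psum_succ, psum_zero']; omega
    have hd0a : a 0 + 1 ≤ d 0 := by
      have := hda 1
      rw [psum_incr (le_refl 1), hpa1, hpd1] at this
      omega
    have hd0b : b 0 + 1 ≤ d 0 := by
      have := hdb 1
      rw [psum_incr (le_refl 1), hpb1, hpd1] at this
      omega
    obtain ⟨m, -, hplat, hdrop⟩ := plateau_max hdstep hMd (by omega) (r := 0) rfl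
    obtain ⟨hepart, hepsum, hesuff⟩ := update_dec hdstep hMd hplat hdrop
    have hepartOf : IsPartOf n (Function.update d m (d m - 1)) := by
      refine ⟨hepart, ?_⟩
      rw [hdsum] at hesuff
      omega
    have hdea : Dom (Function.update d m (d m - 1)) a := by
      intro i
      have h3 := hepsum i
      rcases Nat.eq_zero_or_pos i with rfl | hi
      · exact le_rfl
      · have h4 := hda i
        rw [psum_incr hi] at h4
        split_ifs at h3 <;> omega
    have hdeb : Dom (Function.update d m (d m - 1)) b := by
      intro i
      have h3 := hepsum i
      rcases Nat.eq_zero_or_pos i with rfl | hi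
      · exact le_rfl
      · have h4 := hdb i
        rw [psum_incr hi] at h4
        split_ifs at h3 <;> omega
    have hdec := hcleast _ hepartOf hdea hdeb j
    rcases Nat.lt_or_ge m j with hmj | hmj
    · have h3 := hepsum j
      rw [if_pos hmj] at h3
      omega
    · have h4 : psum d j = j * d 0 := psum_plateau (fun i hi => hplat i (by omega))
      have h5 : psum c j ≤ j * c 0 := psum_le_mul hcpart.1.1 j
      have h6 : j * (c 0 + 1) ≤ j * d 0 := Nat.mul_le_mul_left j (by omega)
      rw [Nat.mul_add, Nat.mul_one] at h6
      omega
  · -- Part 2: closure under inf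
    rintro x y z ⟨s, hs, rfl⟩ ⟨t, ht, rfl⟩ hz
    obtain ⟨hzpart, hdxz, hdyz, hzgreat⟩ := hz
    have hxpart : IsPartOf (n+1) (incr s 0) := incr_partOf hs
    have hypart : IsPartOf (n+1) (incr t 0) := incr_partOf ht
    set w : ℕ → ℕ :=
      fun j => min (psum (incr s 0) (j+1)) (psum (incr t 0) (j+1)) -
        min (psum (incr s 0) j) (psum (incr t 0) j) with hwdef
    have hwps : ∀ j, psum w j = min (psum (incr s 0) j) (psum (incr t 0) j) := by
      intro j
      induction j with
      | zero => simp [psum_zero']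
      | succ j ih =>
        rw [psum_succ, ih]
        have e1 := psum_succ (incr s 0) j
        have e2 := psum_succ (incr t 0) j
        show _ + (min (psum (incr s 0) (j+1)) (psum (incr t 0) (j+1)) -
          min (psum (incr s 0) j) (psum (incr t 0) j)) = _
        omega
    have wstep : ∀ i, w (i+1) ≤ w i := by
      intro i
      have e1 := psum_succ (incr s 0) i
      have e2 := psum_succ (incr s 0) (i+1)
      have e3 := psum_succ (incr t 0) i
      have e4 := psum_succ (incr t 0) (i+1)
      have f1 : incr s 0 (i+1) ≤ incr s 0 i := hxpart.1.1 i
      have f2 : incr t 0 (i+1) ≤ incr t 0 i := hypart.1.1 i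
      show min _ _ - min _ _ ≤ min _ _ - min _ _
      omega
    obtain ⟨Ms, hMs⟩ := hxpart.1.2
    obtain ⟨Mt, hMt⟩ := hypart.1.2
    have wzeros : ∀ i, Ms + Mt ≤ i → w i = 0 := by
      intro i hi
      have e1 := psum_succ (incr s 0) i
      have e2 := psum_succ (incr t 0) i
      have f1 : incr s 0 i = 0 := hMs i (by omega)
      have f2 : incr t 0 i = 0 := hMt i (by omega)
      show min _ _ - min _ _ = 0
      omega
    have hwsum : suff w 0 = n + 1 := by
      rw [suff_eq_psum wzeros, hwps]
      rw [psum_eq_total hxpart hMs (by omega), psum_eq_total hypart hMt (by omega)]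
      omega
    have hdwx : Dom (incr s 0) w := by
      intro j
      rw [hwps]
      omega
    have hdwy : Dom (incr t 0) w := by
      intro j
      rw [hwps]
      omega
    have hzw : ∀ j, psum z j = min (psum (incr s 0) j) (psum (incr t 0) j) := by
      intro j
      have h1 := hzgreat w ⟨⟨wstep, Ms + Mt, wzeros⟩, hwsum⟩ hdwx hdwy j
      rw [hwps] at h1
      have h2 := hdxz j
      have h3 := hdyz j
      omega
    have hz01 : z 1 < z 0 := by
      have e1 := hzw 1
      have e2 := hzw 2
      have p1 : psum z 1 = z 0 := by rw [psum_succ, psum_zero']; omega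
      have p2 : psum z 2 = z 0 + z 1 := by rw [psum_succ, p1]
      have q1 : psum (incr s 0) 1 = s 0 + 1 := by
        rw [psum_incr (le_refl 1), psum_succ, psum_zero']; omega
      have q2 : psum (incr s 0) 2 = s 0 + s 1 + 1 := by
        rw [psum_incr (by omega), psum_succ, psum_succ, psum_zero']; omega
      have r1 : psum (incr t 0) 1 = t 0 + 1 := by
        rw [psum_incr (le_refl 1), psum_succ, psum_zero']; omega
      have r2 : psum (incr t 0) 2 = t 0 + t 1 + 1 := by
        rw [psum_incr (by omega), psum_succ, psum_succ, psum_zero']; omega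
      have hs1 : s 1 ≤ s 0 := hs.1.1 0
      have ht1 : t 1 ≤ t 0 := ht.1.1 0
      omega
    exact exists_dec hzpart hz01
  · -- Part 3: closure under sup
    rintro x y z ⟨s, hs, rfl⟩ ⟨t, ht, rfl⟩ hz
    obtain ⟨hzpart, hdzx, hdzy, hzleast⟩ := hz
    have hxpart : IsPartOf (n+1) (incr s 0) := incr_partOf hs
    have hypart : IsPartOf (n+1) (incr t 0) := incr_partOf ht
    have hs0 : 1 ≤ s 0 := part0_pos hs hn
    have ht0 : 1 ≤ t 0 := part0_pos ht hn
    have hx0 : incr s 0 0 = s 0 + 1 := by simp [incr]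
    have hx1 : incr s 0 1 = s 1 := by simp [incr]
    have hy0 : incr t 0 0 = t 0 + 1 := by simp [incr]
    have hy1 : incr t 0 1 = t 1 := by simp [incr]
    have hs1 : s 1 ≤ s 0 := hs.1.1 0
    have ht1 : t 1 ≤ t 0 := ht.1.1 0
    have hz01 : z 1 < z 0 := by
      by_contra hcon
      push_neg at hcon
      obtain ⟨⟨hzstep, Mz, hMz⟩, hzsum⟩ := hzpart
      have hz1 : z 1 = z 0 := le_antisymm (hzstep 0) hcon
      have hzx1 : s 0 + 1 ≤ z 0 := by
        have h1 := hdzx 1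
        rw [psum_incr (le_refl 1), psum_succ, psum_zero', psum_succ, psum_zero'] at h1
        omega
      have h2 : 2 ≤ z 0 := by omega
      obtain ⟨k, hk1, hplat, hdrop⟩ := plateau_max hzstep hMz (by omega) (r := 1) hz1
      have hzy1 : t 0 + 1 ≤ z 0 := by
        have h1 := hdzy 1
        rw [psum_incr (le_refl 1), psum_succ, psum_zero', psum_succ, psum_zero'] at h1
        omega
      refine sup_contra (⟨⟨⟨hzstep, Mz, hMz⟩, hzsum⟩, hdzx, hdzy, hzleast⟩ :
        IsSupOn (n+1) (incr s 0) (incr t 0) z) h2 hplat hdrop ?_ ?_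
      · intro i hi
        have l1 : psum (incr s 0) i + i ≤ i * incr s 0 0 + 1 :=
          psum_step_bound hxpart.1.1 (by rw [hx0, hx1]; omega) i
        have l2 : i * incr s 0 0 ≤ i * z 0 :=
          Nat.mul_le_mul_left i (by rw [hx0]; omega)
        omega
      · intro i hi
        have l1 : psum (incr t 0) i + i ≤ i * incr t 0 0 + 1 :=
          psum_step_bound hypart.1.1 (by rw [hy0, hy1]; omega) i
        have l2 : i * incr t 0 0 ≤ i * z 0 :=
          Nat.mul_le_mul_left i (by rw [hy0]; omega)
        omega
    exact exists_dec hzpart hz01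
end

section
/- Let s be a partition having a slippery step at 1 and let t be the partition with s →_1 t (the slip from column 1). Then s^{↓1} →_1 s^{↓2}, s^{↓2} →_2 t^{↓1}, and dirreach(s^{↓1}) = (dirreach(s)^{↓1} \ {t^{↓1}}) ∪ {s^{↓2}}. -/
lemma incr_apply (s : ℕ → ℕ) (i j : ℕ) : incr s i j = if j = i then s i + 1 else s j :=
  Function.update_apply ..

lemma incr_apply_ne (s : ℕ → ℕ) {i j : ℕ} (h : j ≠ i) : incr s i j = s j := by
  simp [incr_apply, h]

lemma incr_apply_self (s : ℕ → ℕ) (i : ℕ) : incr s i i = s i + 1 := by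
  simp [incr_apply]

lemma moveGrain_incr0 (s : ℕ → ℕ) {i b : ℕ} (hi : 1 ≤ i) (hb : 1 ≤ b) :
    moveGrain (incr s 0) i b = incr (moveGrain s i b) 0 := by
  funext j
  simp only [moveGrain, incr_apply]
  split_ifs <;> first | exact (‹False›).elim | (subst_vars; omega)

lemma cliff_incr0 (s : ℕ → ℕ) {i : ℕ} (hi : 1 ≤ i) : Cliff (incr s 0) i ↔ Cliff s i := by
  unfold Cliff
  rw [incr_apply_ne s (show i + 1 ≠ 0 by omega), incr_apply_ne s (show i ≠ 0 by omega)]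

lemma slipAt_incr0 (s : ℕ → ℕ) {i m : ℕ} (hi : 1 ≤ i) :
    SlipAt (incr s 0) i m ↔ SlipAt s i m := by
  unfold SlipAt
  have e : ∀ j, 1 ≤ j → incr s 0 j = s j := fun j hj => incr_apply_ne s (by omega)
  constructor
  · rintro ⟨h1, h2, h3⟩
    refine ⟨h1, fun j hj1 hj2 => ?_, ?_⟩
    · have := h2 j hj1 hj2; rwa [e j (by omega), e i hi] at this
    · rwa [e (m + 1) (by omega), e i hi] at h3
  · rintro ⟨h1, h2, h3⟩
    refine ⟨h1, fun j hj1 hj2 => ?_, ?_⟩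
    · rw [e j (by omega), e i hi]; exact h2 j hj1 hj2
    · rw [e (m + 1) (by omega), e i hi]; exact h3

lemma step_incr0 (s v : ℕ → ℕ) {i : ℕ} (hi : 1 ≤ i) :
    Step (incr s 0) i v ↔ ∃ u, Step s i u ∧ v = incr u 0 := by
  constructor
  · rintro (⟨hc, rfl⟩ | ⟨m, hsl, rfl⟩)
    · exact ⟨moveGrain s i (i + 1), Or.inl ⟨(cliff_incr0 s hi).1 hc, rfl⟩,
        moveGrain_incr0 s hi (by omega)⟩
    · exact ⟨moveGrain s i (m + 1), Or.inr ⟨m, (slipAt_incr0 s hi).1 hsl, rfl⟩,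
        moveGrain_incr0 s hi (by omega)⟩
  · rintro ⟨u, (⟨hc, rfl⟩ | ⟨m, hsl, rfl⟩), rfl⟩
    · exact Or.inl ⟨(cliff_incr0 s hi).2 hc, (moveGrain_incr0 s hi (by omega)).symm⟩
    · exact Or.inr ⟨m, (slipAt_incr0 s hi).2 hsl, (moveGrain_incr0 s hi (by omega)).symm⟩

lemma step_zero_eq (s u : ℕ → ℕ) {i : ℕ} (hi : 1 ≤ i) (h : Step s i u) : u 0 = s 0 := by
  rcases h with ⟨_, rfl⟩ | ⟨m, _, rfl⟩ <;> simp only [moveGrain] <;> split_ifs <;> first | exact (‹False›).elim | omega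

/-- If `s` has a slippery step at `1` and `s →_1 t` is the
slip from column `1`, then `s^{↓1} →_1 s^{↓2}`, `s^{↓2} →_2 t^{↓1}`, and
`dirreach(s^{↓1}) = (dirreach(s)^{↓1} \ {t^{↓1}}) ∪ {s^{↓2}}`. -/
theorem stmt5 (s t : ℕ → ℕ) (hs : IsPartition s) (m : ℕ) (hm : SlipAt s 0 m)
    (ht : t = moveGrain s 0 (m + 1)) :
    Step (incr s 0) 0 (incr s 1) ∧ Step (incr s 1) 1 (incr t 0) ∧
    dirreach (incr s 0) =
      ((fun u => incr u 0) '' dirreach s \ {incr t 0}) ∪ {incr s 1} := by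
  obtain ⟨hm1, hmid, hcliff⟩ := hm
  have hs1 : s 1 + 1 = s 0 := hmid 1 le_rfl hm1
  have hs0 : 2 ≤ s 0 := by omega
  have ht0 : t 0 = s 0 - 1 := by rw [ht]; simp [moveGrain]
  have key1 : incr s 1 = moveGrain (incr s 0) 0 1 := by
    funext j
    simp only [moveGrain, incr_apply]
    split_ifs <;> first | exact (‹False›).elim | (subst_vars; omega)
  have key2 : incr t 0 = moveGrain (incr s 1) 1 (m + 1) := by
    subst ht
    funext j
    simp only [moveGrain, incr_apply]
    split_ifs <;> first | exact (‹False›).elim | (subst_vars; omega)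
  have hcliff0 : Cliff (incr s 0) 0 := by
    unfold Cliff
    rw [incr_apply_ne s (by omega : (1:ℕ) ≠ 0), incr_apply_self]
    omega
  have st1 : Step (incr s 0) 0 (incr s 1) := Or.inl ⟨hcliff0, key1⟩
  have st2 : Step (incr s 1) 1 (incr t 0) := by
    rcases eq_or_lt_of_le hm1 with h1 | h2
    · left
      refine ⟨?_, by rw [key2, ← h1]⟩
      unfold Cliff
      rw [incr_apply_ne s (by omega : (2:ℕ) ≠ 1), incr_apply_self]
      have h3 := hcliff
      rw [show m + 1 = 2 from by omega] at h3
      omega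
    · right
      refine ⟨m, ⟨by omega, fun j hj1 hj2 => ?_, ?_⟩, key2⟩
      · rw [incr_apply_ne s (by omega : j ≠ 1), incr_apply_self]
        have := hmid j (by omega) hj2
        omega
      · rw [incr_apply_ne s (by omega : m + 1 ≠ 1), incr_apply_self]
        omega
  have huniq : ∀ u, Step s 0 u → u = t := by
    rintro u (⟨hc, rfl⟩ | ⟨m', ⟨hm'1, hmid', hcl'⟩, rfl⟩)
    · exact absurd hc (by unfold Cliff; intro h; rw [Nat.zero_add] at h; omega)
    · have hmm : m' = m := by
        by_contra hne
        rcases lt_or_gt_of_ne hne with h | h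
        · have := hmid (m' + 1) (by omega) (by omega); omega
        · have := hmid' (m + 1) (by omega) (by omega); omega
      rw [hmm, ht]
  have hstep0 : ∀ v, Step (incr s 0) 0 v → v = incr s 1 := by
    rintro v (⟨hc, rfl⟩ | ⟨m', ⟨hm'1, hmid', hcl'⟩, rfl⟩)
    · exact key1.symm
    · exfalso
      have h1 := hmid' 1 le_rfl (by omega)
      rw [incr_apply_ne s (by omega : (1:ℕ) ≠ 0), incr_apply_self] at h1
      omega
  refine ⟨st1, st2, ?_⟩
  ext v
  simp only [dirreach, Set.mem_union, Set.mem_diff, Set.mem_image, Set.mem_singleton_iff,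
    Set.mem_setOf_eq]
  constructor
  · rintro ⟨i, hi⟩
    rcases Nat.eq_zero_or_pos i with rfl | hpos
    · exact Or.inr (hstep0 v hi)
    · left
      obtain ⟨u, hu, rfl⟩ := (step_incr0 s v hpos).1 hi
      refine ⟨⟨u, ⟨i, hu⟩, rfl⟩, fun hEq => ?_⟩
      have h0 := congrFun hEq 0
      have hu0 := step_zero_eq s u hpos hu
      rw [incr_apply_self, incr_apply_self] at h0
      omega
  · rintro (⟨⟨u, ⟨i, hu⟩, rfl⟩, hne⟩ | hv)
    · rcases Nat.eq_zero_or_pos i with rfl | hpos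
      · exact absurd (by rw [huniq u hu]) hne
      · exact ⟨i, (step_incr0 s (incr u 0) hpos).2 ⟨u, hu, rfl⟩⟩
    · rw [hv]
      exact ⟨0, st1⟩
end

section
/- The partially ordered set (P, ≥_∞) is a lattice. Moreover, for s, t ∈ P, the infimum of s and t is the unique u ∈ P satisfying Σ_j(u) = max(Σ_j(s), Σ_j(t)) for every j ≥ 1 (equivalently, u_i = max(Σ_i(s), Σ_i(t)) − Σ_{i+1}(u) for all i ≥ 1); in particular such a u exists in P, i.e., this prescription defines a nonincreasing, eventually zero sequence. -/
section Aux

lemma suff_eq_sum' {s : ℕ → ℕ} {N : ℕ} (h : ∀ i, N ≤ i → s i = 0) (j : ℕ) :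
    suff s j = ∑ i ∈ Finset.range N, s (j + i) := by
  apply tsum_eq_sum
  intro i hi
  have : ¬ i < N := by simpa using hi
  exact h _ (by omega)

lemma suff_succ' {s : ℕ → ℕ} (hs : IsPartition s) (j : ℕ) :
    suff s j = s j + suff s (j + 1) := by
  obtain ⟨N, hN⟩ := hs.2
  have h' : ∀ i, N + 1 ≤ i → s i = 0 := fun i hi => hN i (by omega)
  rw [suff_eq_sum' h' j, suff_eq_sum' hN (j+1), Finset.sum_range_succ']
  simp only [add_zero]
  rw [add_comm]
  congr 1
  apply Finset.sum_congr rfl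
  intro i _
  congr 1
  omega

lemma suff_eq_zero' {s : ℕ → ℕ} {N : ℕ} (h : ∀ i, N ≤ i → s i = 0) {j : ℕ}
    (hj : N ≤ j) : suff s j = 0 := by
  rw [suff_eq_sum' h]
  apply Finset.sum_eq_zero
  intro i _
  exact h _ (by omega)

lemma part_anti' {s : ℕ → ℕ} (hs : IsPartition s) : Antitone s :=
  antitone_nat_of_succ_le hs.1

lemma suff_eq_zero_of_part' {s : ℕ → ℕ} (hs : IsPartition s) {j : ℕ}
    (h : s j = 0) : suff s j = 0 := by
  obtain ⟨N, hN⟩ := hs.2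
  rw [suff_eq_sum' hN]
  apply Finset.sum_eq_zero
  intro i _
  have := part_anti' hs (Nat.le_add_right j i)
  omega

lemma psum_add_suff' {s : ℕ → ℕ} (hs : IsPartition s) (j : ℕ) :
    psum s j + suff s j = suff s 0 := by
  induction j with
  | zero => simp [psum]
  | succ n ih =>
    have h1 := suff_succ' hs n
    have h2 : psum s (n+1) = psum s n + s n := Finset.sum_range_succ _ _
    omega

lemma suff_eq_zero_of_ge' {s : ℕ → ℕ} (hs : IsPartition s) {j : ℕ}
    (h : suff s 0 ≤ j) : suff s j = 0 := by
  by_contra hne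
  have hpos : 0 < suff s j := Nat.pos_of_ne_zero hne
  have hj : 0 < s j := by
    by_contra h0
    have := suff_eq_zero_of_part' hs (show s j = 0 by omega)
    omega
  have hk : ∀ k ∈ Finset.range j, 1 ≤ s k := fun k hk =>
    le_trans hj (part_anti' hs (le_of_lt (Finset.mem_range.mp hk)))
  have hle : j ≤ psum s j := by
    calc j = ∑ _k ∈ Finset.range j, 1 := by simp
    _ ≤ psum s j := Finset.sum_le_sum hk
  have := psum_add_suff' hs j
  omega

lemma exists_u' (s t : ℕ → ℕ) (hs : IsPartition s) (ht : IsPartition t) :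
    ∃ u, IsPartition u ∧ ∀ j, suff u j = max (suff s j) (suff t j) := by
  set M : ℕ → ℕ := fun j => max (suff s j) (suff t j) with hM
  have mono : ∀ j, M (j+1) ≤ M j := by
    intro j
    have h1 := suff_succ' hs j
    have h2 := suff_succ' ht j
    exact max_le_max (by omega) (by omega)
  have conv : ∀ j, M (j+1) + M (j+1) ≤ M j + M (j+1+1) := by
    intro j
    have hs1 := suff_succ' hs j; have hs2 := suff_succ' hs (j+1)
    have ht1 := suff_succ' ht j; have ht2 := suff_succ' ht (j+1)
    have hss := hs.1 j
    have htt := ht.1 j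
    have ha1 : suff s j ≤ M j := le_max_left _ _
    have ha2 : suff s (j+1+1) ≤ M (j+1+1) := le_max_left _ _
    have hb1 : suff t j ≤ M j := le_max_right _ _
    have hb2 : suff t (j+1+1) ≤ M (j+1+1) := le_max_right _ _
    rcases max_choice (suff s (j+1)) (suff t (j+1)) with h | h <;>
      · rw [show M (j+1) = max (suff s (j+1)) (suff t (j+1)) from rfl, h]; omega
  obtain ⟨Ns, hNs⟩ := hs.2
  obtain ⟨Nt, hNt⟩ := ht.2
  have hM0 : ∀ j, max Ns Nt ≤ j → M j = 0 := by
    intro j hj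
    have h1 : suff s j = 0 := suff_eq_zero' hNs (le_trans (le_max_left _ _) hj)
    have h2 : suff t j = 0 := suff_eq_zero' hNt (le_trans (le_max_right _ _) hj)
    show max (suff s j) (suff t j) = 0
    omega
  have Manti : ∀ a k, M (a + k) ≤ M a := by
    intro a k
    induction k with
    | zero => simp
    | succ k ih => exact le_trans (mono (a + k)) ih
  have tel : ∀ n j, ∑ i ∈ Finset.range n, (M (j+i) - M (j+i+1)) = M j - M (j+n) := by
    intro n j
    induction n with
    | zero => simp
    | succ n ih =>
      rw [Finset.sum_range_succ, ih, show j + (n+1) = j + n + 1 by omega]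
      have h1 : M (j + n) ≤ M j := Manti j n
      have h2 := mono (j + n)
      omega
  refine ⟨fun j => M j - M (j+1), ⟨?_, ?_⟩, ?_⟩
  · intro i
    show M (i+1) - M (i+1+1) ≤ M i - M (i+1)
    have := conv i
    have := mono i
    have := mono (i+1)
    omega
  · refine ⟨max Ns Nt, fun i hi => ?_⟩
    show M i - M (i+1) = 0
    have h1 := hM0 i hi
    have h2 := hM0 (i+1) (by omega)
    omega
  · intro j
    have hu0 : ∀ i, max Ns Nt ≤ i → (fun j => M j - M (j+1)) i = 0 := by
      intro i hi
      show M i - M (i+1) = 0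
      have h1 := hM0 i hi
      have h2 := hM0 (i+1) (by omega)
      omega
    rw [suff_eq_sum' hu0 j]
    show ∑ i ∈ Finset.range (max Ns Nt), (M (j+i) - M (j+i+1)) = max (suff s j) (suff t j)
    rw [tel]
    have h1 := hM0 (j + max Ns Nt) (by omega)
    have h2 : M j = max (suff s j) (suff t j) := rfl
    omega

end Aux

/-- `(P, ≥_∞)` is a lattice: for all partitions `s, t` there
is a unique `u ∈ P` whose suffix sums are `max(Σ_j(s), Σ_j(t))`; any such `u`
is the infimum of `s` and `t`; and a supremum exists as well. -/
theorem stmt12 :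
    (∀ s t : ℕ → ℕ, IsPartition s → IsPartition t →
      ∃! u : ℕ → ℕ, IsPartition u ∧ ∀ j, suff u j = max (suff s j) (suff t j)) ∧
    (∀ s t u : ℕ → ℕ, IsPartition s → IsPartition t → IsPartition u →
      (∀ j, suff u j = max (suff s j) (suff t j)) → IsInfP s t u) ∧
    (∀ s t : ℕ → ℕ, IsPartition s → IsPartition t → ∃ v, IsSupP s t v) := by
  refine ⟨?_, ?_, ?_⟩
  · intro s t hs ht
    obtain ⟨u, hu⟩ := exists_u' s t hs ht
    refine ⟨u, hu, ?_⟩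
    intro u' hu'
    funext j
    have h1 := suff_succ' hu'.1 j
    have h2 := suff_succ' hu.1 j
    have h3 := hu'.2 j; have h4 := hu'.2 (j+1)
    have h5 := hu.2 j; have h6 := hu.2 (j+1)
    omega
  · intro s t u hs ht hu hmax
    refine ⟨hu, fun j => ?_, fun j => ?_, fun d _hd hds hdt j => ?_⟩
    · rw [hmax]; exact le_max_left _ _
    · rw [hmax]; exact le_max_right _ _
    · rw [hmax]; exact max_le (hds j) (hdt j)
  · intro s t hs ht
    set B := suff s 0 with hB
    set D : (ℕ → ℕ) → Prop := fun d => IsPartition d ∧ GeInf d s ∧ GeInf d t with hD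
    set F : (ℕ → ℕ) → ℕ := fun d => ∑ j ∈ Finset.range (B+1), suff d j with hF
    set V : Set ℕ := {n | ∃ d, D d ∧ F d = n} with hV
    have hsuff0 : ∀ j, suff (fun _ => 0) j = 0 := by
      intro j; simp [suff]
    have hzero : D (fun _ => 0) := by
      refine ⟨⟨fun i => le_refl 0, 0, fun i _ => rfl⟩, fun j => ?_, fun j => ?_⟩ <;>
        simp [hsuff0 j]
    have hbdd : BddAbove V := by
      refine ⟨(B+1)*B, ?_⟩
      rintro n ⟨d, hd, rfl⟩
      have hb : ∀ j ∈ Finset.range (B+1), suff d j ≤ B := by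
        intro j _
        have h1 := psum_add_suff' hd.1 j
        have h2 := hd.2.1 0
        omega
      calc F d ≤ ∑ _j ∈ Finset.range (B+1), B := Finset.sum_le_sum hb
      _ = (B+1)*B := by simp [mul_comm]
    have hne : V.Nonempty := ⟨F (fun _ => 0), ⟨_, hzero, rfl⟩⟩
    obtain ⟨c, hcD, hFc⟩ := Nat.sSup_mem hne hbdd
    refine ⟨c, hcD.1, hcD.2.1, hcD.2.2, ?_⟩
    intro d hd hds hdt
    obtain ⟨u, huP, huS⟩ := exists_u' c d hcD.1 hd
    have huD : D u := ⟨huP, fun j => by rw [huS]; exact max_le (hcD.2.1 j) (hds j),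
                        fun j => by rw [huS]; exact max_le (hcD.2.2 j) (hdt j)⟩
    have h1 : F u ≤ F c := by
      rw [hFc]; exact le_csSup hbdd ⟨u, huD, rfl⟩
    have h2 : ∀ j ∈ Finset.range (B+1), suff c j ≤ suff u j := by
      intro j _; rw [huS]; exact le_max_left _ _
    have h3 : F c = F u := le_antisymm (Finset.sum_le_sum h2) h1
    have h4 : ∀ j ∈ Finset.range (B+1), suff c j = suff u j :=
      (Finset.sum_eq_sum_iff_of_le h2).mp h3
    intro j
    by_cases hj : j ≤ B
    · have h5 := h4 j (Finset.mem_range.mpr (by omega))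
      rw [h5, huS]; exact le_max_right _ _
    · have hd0 : suff d 0 ≤ B := hds 0
      have h6 : suff d j = 0 := suff_eq_zero_of_ge' hd (by omega)
      omega
end
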